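/- Let M be the orthogonal projection of ℂ^{6qN} onto the span of the standard basis vectors e_{(b,j,x)} with q+1 ≤ j ≤ 2q. Then the squared Euclidean norm of M A^{−1} e_{(0,0,0)} equals ((1+e^{−1/q})/(1−e^{−3}))² · e^{−2(q+1)/q} (1−e^{−2})/(1−e^{−2/q}). -/

import Mathlib

open Matrix

noncomputable section

/-- The step function underlying the permutation matrix `P`: it sends the index `(j, x)`
to `((j+1) mod 3q, π_{j+1}(x))` for `0 ≤ j < q`, to `(j+1, x)` for `q ≤ j < 2q`, and to
`((j+1) mod 3q, π_{3q−j}⁻¹(x))` for `2q ≤ j < 3q` (here `π` is 0-indexed). -/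
def stepFn (q N : ℕ) (π : Fin q → Equiv.Perm (Fin N)) :
    Fin (3 * q) × Fin N → Fin (3 * q) × Fin N := fun p =>
  if h : (p.1 : ℕ) < q then
    (⟨((p.1 : ℕ) + 1) % (3 * q), Nat.mod_lt _ ((Nat.zero_le _).trans_lt p.1.isLt)⟩,
      π ⟨(p.1 : ℕ), h⟩ p.2)
  else if h2 : (p.1 : ℕ) < 2 * q then
    (⟨((p.1 : ℕ) + 1) % (3 * q), Nat.mod_lt _ ((Nat.zero_le _).trans_lt p.1.isLt)⟩, p.2)
  else
    (⟨((p.1 : ℕ) + 1) % (3 * q), Nat.mod_lt _ ((Nat.zero_le _).trans_lt p.1.isLt)⟩,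
      (π ⟨3 * q - 1 - (p.1 : ℕ), by have := p.1.isLt; omega⟩)⁻¹ p.2)

/-- The `3qN × 3qN` permutation matrix `P`, sending basis vector `e_{(j,x)}` to
`e_{stepFn (j,x)}`. -/
def permMat (q N : ℕ) (π : Fin q → Equiv.Perm (Fin N)) :
    Matrix (Fin (3 * q) × Fin N) (Fin (3 * q) × Fin N) ℂ :=
  Matrix.of fun r c => if r = stepFn q N π c then 1 else 0

/-- The inverse `P⁻¹` of the permutation matrix `P`, sending `e_{stepFn (j,x)}` to
`e_{(j,x)}`. -/
def permMatInv (q N : ℕ) (π : Fin q → Equiv.Perm (Fin N)) :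
    Matrix (Fin (3 * q) × Fin N) (Fin (3 * q) × Fin N) ℂ :=
  Matrix.of fun r c => if stepFn q N π r = c then 1 else 0

/-- The `6qN × 6qN` matrix
`A = (1+e^{−1/q})⁻¹ (|0⟩⟨1| ⊗ (I − e^{−1/q} P) + |1⟩⟨0| ⊗ (I − e^{−1/q} P⁻¹))`. -/
def qlspMat (q N : ℕ) (π : Fin q → Equiv.Perm (Fin N)) :
    Matrix (Fin 2 × Fin (3 * q) × Fin N) (Fin 2 × Fin (3 * q) × Fin N) ℂ :=
  Matrix.of fun r c =>
    ((((1 : ℝ) + Real.exp (-1 / q)) : ℝ) : ℂ)⁻¹ *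
      (if r.1 = 0 ∧ c.1 = 1 then
        ((1 : Matrix (Fin (3 * q) × Fin N) (Fin (3 * q) × Fin N) ℂ)
            - (Real.exp (-1 / q) : ℂ) • permMat q N π) r.2 c.2
      else if r.1 = 1 ∧ c.1 = 0 then
        ((1 : Matrix (Fin (3 * q) × Fin N) (Fin (3 * q) × Fin N) ℂ)
            - (Real.exp (-1 / q) : ℂ) • permMatInv q N π) r.2 c.2
      else 0)

/-- The orthogonal projection `M` of `ℂ^{6qN}` onto the span of the standard basis
vectors `e_{(b,j,x)}` with `q+1 ≤ j ≤ 2q`, as a diagonal matrix. -/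
def projMat (q N : ℕ) :
    Matrix (Fin 2 × Fin (3 * q) × Fin N) (Fin 2 × Fin (3 * q) × Fin N) ℂ :=
  Matrix.diagonal fun p =>
    if q + 1 ≤ (p.2.1 : ℕ) ∧ (p.2.1 : ℕ) ≤ 2 * q then 1 else 0


namespace QLSPaux1
open Finset

variable (q N : ℕ) (π : Fin q → Equiv.Perm (Fin N))

def fPerm (j : ℕ) : Equiv.Perm (Fin N) :=
  if h : j < q then π ⟨j, h⟩
  else if h2 : j < 2 * q then 1
  else if h3 : j < 3 * q then (π ⟨3 * q - 1 - j, by omega⟩)⁻¹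
  else 1

lemma stepFn_eq (p : Fin (3 * q) × Fin N) :
    stepFn q N π p =
      (⟨((p.1 : ℕ) + 1) % (3 * q), Nat.mod_lt _ ((Nat.zero_le _).trans_lt p.1.isLt)⟩,
        fPerm q N π (p.1 : ℕ) p.2) := by
  unfold stepFn fPerm
  have hlt := p.1.isLt
  split_ifs with h1 h2 h3 <;> first | rfl | omega

lemma stepFn_inj : Function.Injective (stepFn q N π) := by
  intro p p' h
  rw [stepFn_eq, stepFn_eq] at h
  have hlt := p.1.isLt; have hlt' := p'.1.isLt
  have h1 : ((p.1 : ℕ) + 1) % (3 * q) = ((p'.1 : ℕ) + 1) % (3 * q) :=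
    congrArg Fin.val (congrArg Prod.fst h)
  have key : ∀ a : ℕ, a < 3 * q → (a + 1) % (3 * q) = if a + 1 = 3 * q then 0 else a + 1 := by
    intro a ha
    split_ifs with hx
    · rw [hx, Nat.mod_self]
    · exact Nat.mod_eq_of_lt (by omega)
  rw [key _ hlt, key _ hlt'] at h1
  have e1 : (p.1 : ℕ) = (p'.1 : ℕ) := by split_ifs at h1 <;> omega
  have e1' : p.1 = p'.1 := Fin.ext e1
  have h2 : fPerm q N π (p.1 : ℕ) p.2 = fPerm q N π (p'.1 : ℕ) p'.2 :=
    congrArg Prod.snd h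
  rw [← e1] at h2
  have e2 : p.2 = p'.2 := (fPerm q N π (p.1 : ℕ)).injective h2
  exact Prod.ext e1' e2

def sigma : Equiv.Perm (Fin (3 * q) × Fin N) :=
  Equiv.ofBijective _ (Finite.injective_iff_bijective.mp (stepFn_inj q N π))

lemma sigma_apply (p : Fin (3 * q) × Fin N) :
    sigma q N π p =
      (⟨((p.1 : ℕ) + 1) % (3 * q), Nat.mod_lt _ ((Nat.zero_le _).trans_lt p.1.isLt)⟩,
        fPerm q N π (p.1 : ℕ) p.2) := stepFn_eq q N π p

def Gp : ℕ → Equiv.Perm (Fin N)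
  | 0 => 1
  | (k + 1) => fPerm q N π k * Gp k

@[simp] lemma Gp_zero : Gp q N π 0 = 1 := rfl
@[simp] lemma Gp_succ (k : ℕ) : Gp q N π (k + 1) = fPerm q N π k * Gp q N π k := rfl

lemma sigma_pow_zero_apply (hq : 1 ≤ q) :
    ∀ k, k ≤ 3 * q → ∀ x : Fin N,
      (sigma q N π ^ k) ((⟨0, by omega⟩ : Fin (3 * q)), x) =
        ((⟨k % (3 * q), Nat.mod_lt _ (by omega)⟩ : Fin (3 * q)), Gp q N π k x) := by
  intro k
  induction k with
  | zero => intro _ x; simp [Nat.zero_mod]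
  | succ k ih =>
    intro hk x
    have hk' : k < 3 * q := by omega
    rw [pow_succ', Equiv.Perm.mul_apply, ih (by omega) x, sigma_apply]
    have hmod : k % (3 * q) = k := Nat.mod_eq_of_lt hk'
    simp only [hmod, Gp_succ, Equiv.Perm.mul_apply]

lemma Gp_q_add (hq : 1 ≤ q) : ∀ k, k ≤ q → Gp q N π (q + k) = Gp q N π q := by
  intro k
  induction k with
  | zero => intro _; rfl
  | succ k ih =>
    intro hk
    have : q + (k + 1) = (q + k) + 1 := by omega
    rw [this, Gp_succ, ih (by omega)]
    have hf : fPerm q N π (q + k) = 1 := by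
      unfold fPerm; split_ifs with h1 h2 <;> first | rfl | omega
    rw [hf, one_mul]

lemma Gp_2q_add (hq : 1 ≤ q) : ∀ k, k ≤ q → Gp q N π (2 * q + k) = Gp q N π (q - k) := by
  intro k
  induction k with
  | zero =>
    intro _
    have h1 : 2 * q + 0 = q + q := by omega
    have h2 : q - 0 = q := rfl
    rw [h1, h2, Gp_q_add q N π hq q le_rfl]
  | succ k ih =>
    intro hk
    have h1 : 2 * q + (k + 1) = (2 * q + k) + 1 := by omega
    rw [h1, Gp_succ, ih (by omega)]
    have hf : fPerm q N π (2 * q + k) = (π ⟨q - 1 - k, by omega⟩)⁻¹ := by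
      have hidx : 3 * q - 1 - (2 * q + k) = q - 1 - k := by omega
      unfold fPerm
      split_ifs with h1 h2 h3 <;> first | omega | (simp only [hidx])
    have hfp : fPerm q N π (q - (k + 1)) = π ⟨q - 1 - k, by omega⟩ := by
      have hidx : q - (k + 1) = q - 1 - k := by omega
      unfold fPerm
      split_ifs with hh <;> first | omega | (simp only [hidx])
    have hg : Gp q N π (q - k) = π ⟨q - 1 - k, by omega⟩ * Gp q N π (q - (k + 1)) := by
      have h2 : q - k = (q - (k + 1)) + 1 := by omega
      rw [h2, Gp_succ, hfp]
    rw [hf, hg, ← mul_assoc, inv_mul_cancel, one_mul]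

lemma Gp_3q (hq : 1 ≤ q) : Gp q N π (3 * q) = 1 := by
  have h1 : 3 * q = 2 * q + q := by omega
  rw [h1, Gp_2q_add q N π hq q le_rfl, Nat.sub_self, Gp_zero]

lemma sigma_pow_order (hq : 1 ≤ q) : sigma q N π ^ (3 * q) = 1 := by
  refine Equiv.ext fun p => ?_
  obtain ⟨j, x⟩ := p
  rw [Equiv.Perm.one_apply]
  set y := (Gp q N π (j : ℕ))⁻¹ x with hy
  have hj : (j : ℕ) < 3 * q := j.isLt
  have h1 := sigma_pow_zero_apply q N π hq (j : ℕ) (le_of_lt hj) y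
  have hmodj : (j : ℕ) % (3 * q) = (j : ℕ) := Nat.mod_eq_of_lt hj
  have h1' : (sigma q N π ^ (j : ℕ)) ((⟨0, by omega⟩ : Fin (3 * q)), y) = (j, x) := by
    rw [h1]
    refine Prod.ext (Fin.ext ?_) ?_
    · exact hmodj
    · simp [hy]
  have h2 := sigma_pow_zero_apply q N π hq (3 * q) le_rfl y
  have h2' : (sigma q N π ^ (3 * q)) ((⟨0, by omega⟩ : Fin (3 * q)), y)
      = ((⟨0, by omega⟩ : Fin (3 * q)), y) := by
    rw [h2]
    refine Prod.ext (Fin.ext ?_) ?_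
    · simp
    · rw [Gp_3q q N π hq]; rfl
  calc (sigma q N π ^ (3 * q)) (j, x)
      = (sigma q N π ^ (3 * q)) ((sigma q N π ^ (j : ℕ)) ((⟨0, by omega⟩ : Fin (3 * q)), y)) := by
        rw [h1']
    _ = (sigma q N π ^ (j : ℕ)) ((sigma q N π ^ (3 * q)) ((⟨0, by omega⟩ : Fin (3 * q)), y)) := by
        rw [← Equiv.Perm.mul_apply, ← Equiv.Perm.mul_apply, ← pow_add, ← pow_add, Nat.add_comm]
    _ = (j, x) := by rw [h2', h1']


end QLSPaux1

namespace QLSPaux2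
open Finset

variable {I : Type*} [Fintype I] [DecidableEq I]

def Cmat (τ : Equiv.Perm I) : Matrix I I ℂ :=
  Matrix.of fun r c => if r = τ c then 1 else 0

lemma Cmat_one : Cmat (1 : Equiv.Perm I) = 1 := by
  ext r c
  simp [Cmat, Matrix.one_apply]
  congr

lemma Cmat_mul (σ τ : Equiv.Perm I) : Cmat σ * Cmat τ = Cmat (σ * τ) := by
  ext r c
  rw [Matrix.mul_apply, Finset.sum_eq_single (τ c)]
  · simp [Cmat, Equiv.Perm.mul_apply]
    congr
  · intro b _ hb
    simp [Cmat, hb]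
  · intro h; exact absurd (Finset.mem_univ _) h

lemma Cmat_pow (σ : Equiv.Perm I) (n : ℕ) : Cmat σ ^ n = Cmat (σ ^ n) := by
  induction n with
  | zero => simp [pow_zero, Cmat_one]
  | succ n ih => rw [pow_succ, pow_succ, ih, Cmat_mul]

lemma Cmat_mulVec_single (τ : Equiv.Perm I) (p0 : I) :
    Cmat τ *ᵥ Pi.single p0 (1 : ℂ) = Pi.single (τ p0) 1 := by
  funext r
  rw [Matrix.mulVec_single]
  simp [Cmat, Pi.single_apply]

lemma geom_inv (a : ℂ) (n : ℕ) (τ : Equiv.Perm I) (h : τ ^ n = 1) :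
    (1 - a • Cmat τ) * ∑ k ∈ Finset.range n, (a • Cmat τ) ^ k = (1 - a ^ n) • 1 := by
  have h1 := mul_geom_sum (a • Cmat τ) n
  have h2 : (1 - a • Cmat τ) * ∑ k ∈ Finset.range n, (a • Cmat τ) ^ k
      = -((a • Cmat τ - 1) * ∑ k ∈ Finset.range n, (a • Cmat τ) ^ k) := by
    rw [← neg_mul, neg_sub]
  rw [h2, h1]
  rw [smul_pow, Cmat_pow, h, Cmat_one]
  rw [neg_sub, sub_smul, one_smul]


end QLSPaux2

open QLSPaux2

/-- Let `M` be the orthogonal projection of `ℂ^{6qN}` onto the span of the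
standard basis vectors `e_{(b,j,x)}` with `q+1 ≤ j ≤ 2q`. Then the squared Euclidean norm
of `M A⁻¹ e_{(0,0,0)}` equals
`((1+e^{−1/q})/(1−e^{−3}))² · e^{−2(q+1)/q} (1−e^{−2})/(1−e^{−2/q})`. -/
theorem qlspMat_proj_inv_mulVec_single_norm_sq (q N : ℕ) (hq : 1 ≤ q) (hN : 1 ≤ N)
    (π : Fin q → Equiv.Perm (Fin N)) :
    ∑ p : Fin 2 × Fin (3 * q) × Fin N,
        ‖(projMat q N).mulVec
          ((qlspMat q N π)⁻¹.mulVec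
            (Pi.single ((0 : Fin 2), (⟨0, by omega⟩ : Fin (3 * q)),
              (⟨0, by omega⟩ : Fin N)) 1)) p‖ ^ 2 =
      ((1 + Real.exp (-1 / q)) / (1 - Real.exp (-3))) ^ 2 *
        (Real.exp (-2 * (q + 1) / q) * (1 - Real.exp (-2)) / (1 - Real.exp (-2 / q))) := by
  classical
  have hq3 : 0 < 3 * q := by omega
  have hqR : (q : ℝ) ≠ 0 := Nat.cast_ne_zero.mpr (by omega)
  have hqRpos : (0 : ℝ) < (q : ℝ) := by positivity
  set e : ℝ := Real.exp (-1 / (q : ℝ)) with he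
  have he3 : e ^ (3 * q) = Real.exp (-3) := by
    rw [he, ← Real.exp_nat_mul]
    congr 1
    push_cast
    field_simp
  have he2 : e ^ 2 = Real.exp (-2 / (q : ℝ)) := by
    rw [he, ← Real.exp_nat_mul]
    congr 1
    push_cast
    ring
  have hr2q : (e ^ 2) ^ q = Real.exp (-2) := by
    rw [he2, ← Real.exp_nat_mul]
    congr 1
    field_simp
  have hr2q1 : (e ^ 2) ^ (q + 1) = Real.exp (-2 * ((q : ℝ) + 1) / (q : ℝ)) := by
    rw [he2, ← Real.exp_nat_mul]
    congr 1
    push_cast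
    ring
  have h3pos : 0 < 1 - Real.exp (-3) := by
    have := Real.exp_lt_one_iff.mpr (by norm_num : (-3 : ℝ) < 0)
    linarith
  have hepos : 0 < e := Real.exp_pos _
  have helt1 : e < 1 := by
    rw [he]
    exact Real.exp_lt_one_iff.mpr (div_neg_of_neg_of_pos (by norm_num) hqRpos)
  have hr2lt1 : e ^ 2 < 1 := by nlinarith
  have hrne1 : e ^ 2 ≠ 1 := ne_of_lt hr2lt1
  set a : ℂ := ((e : ℝ) : ℂ) with ha
  set cc : ℂ := (((1 : ℝ) + e : ℝ) : ℂ) with hcc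
  have ha3 : a ^ (3 * q) = ((Real.exp (-3) : ℝ) : ℂ) := by
    rw [ha, ← Complex.ofReal_pow, he3]
  have hsub_ne : (1 : ℂ) - a ^ (3 * q) ≠ 0 := by
    rw [ha3, ← Complex.ofReal_one, ← Complex.ofReal_sub]
    exact Complex.ofReal_ne_zero.mpr (ne_of_gt h3pos)
  have hcc_ne : cc ≠ 0 := by
    rw [hcc]
    exact Complex.ofReal_ne_zero.mpr (by positivity)
  set σ : Equiv.Perm (Fin (3 * q) × Fin N) := QLSPaux1.sigma q N π with hσdef
  have hsig : σ ^ (3 * q) = 1 := QLSPaux1.sigma_pow_order q N π hq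
  have hsiginv : σ⁻¹ ^ (3 * q) = 1 := by rw [inv_pow, hsig, inv_one]
  have hP : permMat q N π = Cmat σ := rfl
  have hPinv : permMatInv q N π = Cmat σ⁻¹ := by
    ext r c
    simp only [permMatInv, Cmat, Matrix.of_apply]
    refine if_congr ?_ rfl rfl
    exact (show (stepFn q N π r = c) ↔ (σ r = c) from Iff.rfl).trans
      Equiv.Perm.eq_inv_iff_eq.symm
  set U : Matrix (Fin (3 * q) × Fin N) (Fin (3 * q) × Fin N) ℂ := 1 - a • Cmat σ with hU
  set V : Matrix (Fin (3 * q) × Fin N) (Fin (3 * q) × Fin N) ℂ := 1 - a • Cmat σ⁻¹ with hV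
  set Sp : Matrix (Fin (3 * q) × Fin N) (Fin (3 * q) × Fin N) ℂ :=
    ∑ k ∈ Finset.range (3 * q), (a • Cmat σ) ^ k with hSpdef
  set Sm : Matrix (Fin (3 * q) × Fin N) (Fin (3 * q) × Fin N) ℂ :=
    ∑ k ∈ Finset.range (3 * q), (a • Cmat σ⁻¹) ^ k with hSmdef
  have hUS : U * Sp = (1 - a ^ (3 * q)) • 1 := geom_inv a (3 * q) σ hsig
  have hVS : V * Sm = (1 - a ^ (3 * q)) • 1 := geom_inv a (3 * q) σ⁻¹ hsiginv
  set E01 : Matrix (Fin 2) (Fin 2) ℂ := Matrix.single (0 : Fin 2) (1 : Fin 2) (1 : ℂ) with hE01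
  set E10 : Matrix (Fin 2) (Fin 2) ℂ := Matrix.single (1 : Fin 2) (0 : Fin 2) (1 : ℂ) with hE10
  have hA : qlspMat q N π = cc⁻¹ •
      (kroneckerMap (· * ·) E01 U + kroneckerMap (· * ·) E10 V) := by
    ext r c
    obtain ⟨b, p⟩ := r
    obtain ⟨b', p'⟩ := c
    simp only [qlspMat, Matrix.of_apply, Matrix.smul_apply, Matrix.add_apply,
      Matrix.kroneckerMap_apply, hE01, hE10, Matrix.single, hP, hPinv, smul_eq_mul]
    rw [← he, ← ha, ← hcc, ← hU, ← hV]
    fin_cases b <;> fin_cases b' <;> norm_num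
  set B : Matrix (Fin 2 × Fin (3 * q) × Fin N) (Fin 2 × Fin (3 * q) × Fin N) ℂ :=
    (cc * (1 - a ^ (3 * q))⁻¹) •
      (kroneckerMap (· * ·) E01 Sm + kroneckerMap (· * ·) E10 Sp) with hB
  have hE1 : E01 * E10 = Matrix.single 0 0 (1 : ℂ) := by
    rw [hE01, hE10, Matrix.single_mul_single_same, one_mul]
  have hE2 : E10 * E01 = Matrix.single 1 1 (1 : ℂ) := by
    rw [hE01, hE10, Matrix.single_mul_single_same, one_mul]
  have hE3 : E01 * E01 = 0 := by
    rw [hE01]; exact Matrix.single_mul_single_of_ne _ _ _ _ (by decide) _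
  have hE4 : E10 * E10 = 0 := by
    rw [hE10]; exact Matrix.single_mul_single_of_ne _ _ _ _ (by decide) _
  have hEsum : Matrix.single (0 : Fin 2) (0 : Fin 2) (1 : ℂ) + Matrix.single (1 : Fin 2) (1 : Fin 2) (1 : ℂ) = 1 := by
    ext i j
    fin_cases i <;> fin_cases j <;> simp [Matrix.single, Matrix.one_apply]
  have hAB : qlspMat q N π * B = 1 := by
    rw [hA, hB, smul_mul_assoc, mul_smul_comm, smul_smul]
    rw [add_mul, mul_add, mul_add, ← Matrix.mul_kronecker_mul, ← Matrix.mul_kronecker_mul,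
      ← Matrix.mul_kronecker_mul, ← Matrix.mul_kronecker_mul, hE3, hE1, hE2, hE4,
      Matrix.zero_kronecker, Matrix.zero_kronecker, hUS, hVS,
      Matrix.kronecker_smul, Matrix.kronecker_smul]
    rw [zero_add, add_zero, ← smul_add, ← Matrix.add_kronecker, hEsum,
      Matrix.one_kronecker_one, smul_smul]
    rw [show cc⁻¹ * (cc * (1 - a ^ (3 * q))⁻¹) * (1 - a ^ (3 * q)) = 1 by
      field_simp]
    rw [one_smul]
  have hinv : (qlspMat q N π)⁻¹ = B := inv_eq_right_inv hAB
  set p0 : Fin (3 * q) × Fin N := (⟨0, by omega⟩, ⟨0, by omega⟩) with hp0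
  have hSp : ∀ (j : Fin (3 * q)) (x : Fin N),
      Sp (j, x) p0 = if x = QLSPaux1.Gp q N π (j : ℕ) ⟨0, by omega⟩
        then a ^ (j : ℕ) else 0 := by
    intro j x
    have step1 : Sp (j, x) p0
        = ∑ k ∈ Finset.range (3 * q), a ^ k * (if (j, x) = (σ ^ k) p0 then 1 else 0) := by
      rw [hSpdef, Matrix.sum_apply]
      refine Finset.sum_congr rfl fun k _ => ?_
      rw [smul_pow, Cmat_pow]
      simp [Cmat, Matrix.smul_apply, smul_eq_mul]
    rw [step1, Finset.sum_eq_single (j : ℕ)]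
    · have hσj := QLSPaux1.sigma_pow_zero_apply q N π hq (j : ℕ) j.isLt.le ⟨0, by omega⟩
      rw [← hσdef] at hσj
      rw [hp0, hσj]
      have hfj : ((⟨(j : ℕ) % (3 * q), Nat.mod_lt _ (by omega)⟩ : Fin (3 * q))) = j :=
        Fin.ext (Nat.mod_eq_of_lt j.isLt)
      by_cases hx : x = QLSPaux1.Gp q N π (j : ℕ) ⟨0, by omega⟩
      · rw [if_pos hx, if_pos, mul_one]
        exact Prod.ext hfj.symm hx
      · rw [if_neg hx, if_neg, mul_zero]
        intro hcontra
        exact hx (congrArg Prod.snd hcontra)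
    · intro k hk hkj
      have hklt : k < 3 * q := Finset.mem_range.mp hk
      have hσk := QLSPaux1.sigma_pow_zero_apply q N π hq k hklt.le ⟨0, by omega⟩
      rw [← hσdef] at hσk
      rw [hp0, hσk]
      rw [if_neg, mul_zero]
      intro hcontra
      apply hkj
      have h1 := congrArg (fun z : Fin (3 * q) × Fin N => ((z.1 : Fin (3 * q)) : ℕ)) hcontra
      simpa [Nat.mod_eq_of_lt hklt] using h1.symm
    · intro hnot
      exact absurd (Finset.mem_range.mpr j.isLt) hnot
  set K : ℝ := (1 + e) / (1 - Real.exp (-3)) with hK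
  have hκ : cc * (1 - a ^ (3 * q))⁻¹ = ((K : ℝ) : ℂ) := by
    have h1 : ((1 : ℂ) - ((Real.exp (-3) : ℝ) : ℂ)) = (((1 - Real.exp (-3) : ℝ)) : ℂ) := by
      push_cast; ring
    rw [hcc, ha3, h1, ← Complex.ofReal_inv, ← Complex.ofReal_mul, hK]
    norm_num [div_eq_mul_inv]
  have hBe : ∀ r : Fin 2 × Fin (3 * q) × Fin N,
      (B *ᵥ Pi.single ((0 : Fin 2), p0) (1 : ℂ)) r = B r ((0 : Fin 2), p0) := by
    intro r
    rw [Matrix.mulVec_single]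
    exact mul_one _
  have hBentry : ∀ (b : Fin 2) (j : Fin (3 * q)) (x : Fin N),
      B (b, j, x) ((0 : Fin 2), p0)
        = if b = 1 then ((K : ℝ) : ℂ) * Sp (j, x) p0 else 0 := by
    intro b j x
    rw [hB]
    simp only [Matrix.smul_apply, Matrix.add_apply, Matrix.kroneckerMap_apply,
      hE01, hE10, Matrix.single, Matrix.of_apply, smul_eq_mul]
    rw [← hκ]
    fin_cases b <;> norm_num
  have hGfix : ∀ (j : Fin (3 * q)), True := fun _ => trivial
  have hfull : ∀ (b : Fin 2) (j : Fin (3 * q)) (x : Fin N),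
      (projMat q N *ᵥ (B *ᵥ Pi.single ((0 : Fin 2), p0) (1 : ℂ))) (b, j, x)
        = if b = 1 ∧ (q + 1 ≤ (j : ℕ) ∧ (j : ℕ) ≤ 2 * q)
              ∧ x = QLSPaux1.Gp q N π (j : ℕ) ⟨0, by omega⟩
          then ((K * e ^ (j : ℕ) : ℝ) : ℂ) else 0 := by
    intro b j x
    simp only [projMat]
    rw [Matrix.mulVec_diagonal, hBe, hBentry, hSp]
    by_cases h1 : b = 1 <;>
      by_cases h2 : q + 1 ≤ (j : ℕ) ∧ (j : ℕ) ≤ 2 * q <;>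
        by_cases h3 : x = QLSPaux1.Gp q N π (j : ℕ) ⟨0, by omega⟩ <;>
          simp only [h1, h2, h3, if_true, if_false, true_and, and_true, false_and,
            and_false, if_neg, mul_zero, zero_mul, mul_one, one_mul] <;>
          first
            | (push_cast; ring)
            | simp [h1, h2, h3]
  rw [hinv]
  have htot : ∀ p : Fin 2 × Fin (3 * q) × Fin N,
      ‖(projMat q N *ᵥ (B *ᵥ Pi.single ((0 : Fin 2), p0) (1 : ℂ))) p‖ ^ 2
        = if p.1 = 1 ∧ (q + 1 ≤ (p.2.1 : ℕ) ∧ (p.2.1 : ℕ) ≤ 2 * q)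
              ∧ p.2.2 = QLSPaux1.Gp q N π (p.2.1 : ℕ) ⟨0, by omega⟩
          then (K * e ^ (p.2.1 : ℕ)) ^ 2 else 0 := by
    intro p
    obtain ⟨b, j, x⟩ := p
    rw [hfull]
    split_ifs
    · rw [Complex.norm_real, Real.norm_eq_abs, sq_abs]
    · simp
  rw [Finset.sum_congr rfl fun p _ => htot p]
  rw [Fintype.sum_prod_type, Fin.sum_univ_two]
  have hz0 : ((0 : Fin 2) = 1) = False := by simp
  have hz1 : ((1 : Fin 2) = 1) = True := by simp
  simp only [hz0, hz1, false_and, if_false, Finset.sum_const_zero, zero_add, true_and]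
  rw [Fintype.sum_prod_type]
  have hxsum : ∀ j : Fin (3 * q),
      (∑ x : Fin N, if (q + 1 ≤ (j : ℕ) ∧ (j : ℕ) ≤ 2 * q)
            ∧ x = QLSPaux1.Gp q N π (j : ℕ) ⟨0, by omega⟩
          then (K * e ^ (j : ℕ)) ^ 2 else 0)
        = if q + 1 ≤ (j : ℕ) ∧ (j : ℕ) ≤ 2 * q then (K * e ^ (j : ℕ)) ^ 2 else 0 := by
    intro j
    by_cases hc : q + 1 ≤ (j : ℕ) ∧ (j : ℕ) ≤ 2 * q
    · simp only [hc, true_and, if_true]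
      rw [Finset.sum_ite_eq' Finset.univ (QLSPaux1.Gp q N π (j : ℕ) ⟨0, by omega⟩)
        (fun _ => (K * e ^ (j : ℕ)) ^ 2)]
      simp
    · simp only [hc, false_and, if_false, Finset.sum_const_zero]
  rw [Finset.sum_congr rfl fun j _ => hxsum j]
  rw [Fin.sum_univ_eq_sum_range (fun j => if q + 1 ≤ j ∧ j ≤ 2 * q
    then (K * e ^ j) ^ 2 else 0) (3 * q)]
  rw [← Finset.sum_filter]
  have hfil : Finset.filter (fun j => q + 1 ≤ j ∧ j ≤ 2 * q) (Finset.range (3 * q))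
      = Finset.Ico (q + 1) (2 * q + 1) := by
    ext m
    simp only [Finset.mem_filter, Finset.mem_range, Finset.mem_Ico]
    omega
  rw [hfil, Finset.sum_Ico_eq_sum_range]
  have hqq : 2 * q + 1 - (q + 1) = q := by omega
  rw [hqq]
  have hterm : ∀ i, (K * e ^ (q + 1 + i)) ^ 2 = (K ^ 2 * (e ^ 2) ^ (q + 1)) * (e ^ 2) ^ i := by
    intro i
    ring
  rw [Finset.sum_congr rfl fun i _ => hterm i]
  rw [← Finset.mul_sum, geom_sum_eq hrne1]
  have hne1 : e ^ 2 - 1 ≠ 0 := sub_ne_zero.mpr hrne1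
  have hne2 : (1 : ℝ) - e ^ 2 ≠ 0 := sub_ne_zero.mpr (Ne.symm hrne1)
  rw [← hr2q1, ← hr2q, ← he2]
  field_simp
  ring
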